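/- There is no RML formula equivalent to the GML formula ◊^{≥2}P, that is, there is no RML formula ψ such that for all pointed Π-labeled graphs (G,v) with P ∈ Π: G,v ⊨ ψ iff G,v ⊨ ◊^{≥2}P. -/

import Mathlib

open scoped Classical

/-- A `α`-labeled finite directed graph. -/
structure LabeledGraph (α : Type) : Type 1 where
  V : Type
  [fintypeV : Fintype V]
  adj : V → V → Prop
  label : V → α → Prop

attribute [instance] LabeledGraph.fintypeV

namespace LabeledGraph

variable {α : Type}

/-- The neighborhood (set of successors) of a vertex. -/
def nbhd (G : LabeledGraph α) (v : G.V) : Set G.V := {u | G.adj v u}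

/-- The neighborhood of a vertex, as a finset. -/
noncomputable def nbhdFinset (G : LabeledGraph α) (v : G.V) : Finset G.V :=
  Finset.univ.filter (fun u => G.adj v u)

/-- The `c`-scaling of a graph: each vertex is multiplied `c` times. -/
def scale (G : LabeledGraph α) (c : ℕ) : LabeledGraph α where
  V := G.V × Fin c
  adj := fun p q => G.adj p.1 q.1
  label := fun p => G.label p.1

end LabeledGraph

/-- Formulas of modal logic ML. -/
inductive ML (α : Type) : Type where
  | atom : α → ML α
  | neg  : ML α → ML α
  | or   : ML α → ML α → ML α
  | dia  : ML α → ML α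

/-- Satisfaction for ML. -/
def ML.sat {α : Type} (G : LabeledGraph α) : ML α → G.V → Prop
  | .atom p, v => G.label v p
  | .neg φ, v => ¬ ML.sat G φ v
  | .or φ ψ, v => ML.sat G φ v ∨ ML.sat G ψ v
  | .dia φ, v => ∃ u, G.adj v u ∧ ML.sat G φ u

/-- Formulas of graded modal logic GML. -/
inductive GML (α : Type) : Type where
  | atom : α → GML α
  | neg  : GML α → GML α
  | or   : GML α → GML α → GML α
  | dia  : ℕ → GML α → GML α

/-- Satisfaction for GML: `dia n φ` is `◊^{≥n} φ`. -/
def GML.sat {α : Type} (G : LabeledGraph α) : GML α → G.V → Prop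
  | .atom p, v => G.label v p
  | .neg φ, v => ¬ GML.sat G φ v
  | .or φ ψ, v => GML.sat G φ v ∨ GML.sat G ψ v
  | .dia n φ, v => n ≤ {u | G.adj v u ∧ GML.sat G φ u}.ncard

/-- Formulas of ratio modal logic RML; diamonds carry a ratio `r ∈ [0,1]`. -/
inductive RML (α : Type) : Type where
  | atom  : α → RML α
  | neg   : RML α → RML α
  | or    : RML α → RML α → RML α
  | diaGe : Set.Icc (0:ℝ) 1 → RML α → RML α
  | diaGt : Set.Icc (0:ℝ) 1 → RML α → RML α

/-- Satisfaction for RML. If a vertex has no successors then `◊^{≥r}φ`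
holds and `◊^{>r}φ` fails; otherwise the fraction of successors satisfying
`φ` is compared with `r`. -/
noncomputable def RML.sat {α : Type} (G : LabeledGraph α) : RML α → G.V → Prop
  | .atom p, v => G.label v p
  | .neg φ, v => ¬ RML.sat G φ v
  | .or φ ψ, v => RML.sat G φ v ∨ RML.sat G ψ v
  | .diaGe r φ, v => (G.nbhd v).Nonempty →
      (r : ℝ) ≤ ({u | G.adj v u ∧ RML.sat G φ u}.ncard : ℝ) / ((G.nbhd v).ncard : ℝ)
  | .diaGt r φ, v => (G.nbhd v).Nonempty ∧
      (r : ℝ) < ({u | G.adj v u ∧ RML.sat G φ u}.ncard : ℝ) / ((G.nbhd v).ncard : ℝ)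

/-- Formulas of AFML[1] (diamond fragment of alternation-free modal logic). -/
inductive AFML1 (α : Type) : Type where
  | atom   : α → AFML1 α
  | natom  : α → AFML1 α
  | boxBot : AFML1 α
  | and    : AFML1 α → AFML1 α → AFML1 α
  | or     : AFML1 α → AFML1 α → AFML1 α
  | dia    : AFML1 α → AFML1 α

/-- Satisfaction for AFML[1]. -/
def AFML1.sat {α : Type} (G : LabeledGraph α) : AFML1 α → G.V → Prop
  | .atom p, v => G.label v p
  | .natom p, v => ¬ G.label v p
  | .boxBot, v => ∀ u, ¬ G.adj v u
  | .and φ ψ, v => AFML1.sat G φ v ∧ AFML1.sat G ψ v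
  | .or φ ψ, v => AFML1.sat G φ v ∨ AFML1.sat G ψ v
  | .dia φ, v => ∃ u, G.adj v u ∧ AFML1.sat G φ u

/-- Modal depth of an AFML[1] formula. -/
def AFML1.depth {α : Type} : AFML1 α → ℕ
  | .atom _ => 0
  | .natom _ => 0
  | .boxBot => 1
  | .and φ ψ => max (AFML1.depth φ) (AFML1.depth ψ)
  | .or φ ψ => max (AFML1.depth φ) (AFML1.depth ψ)
  | .dia φ => AFML1.depth φ + 1

/-- Formulas of AFML[2] (box fragment of alternation-free modal logic). -/
inductive AFML2 (α : Type) : Type where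
  | atom   : α → AFML2 α
  | natom  : α → AFML2 α
  | diaTop : AFML2 α
  | and    : AFML2 α → AFML2 α → AFML2 α
  | or     : AFML2 α → AFML2 α → AFML2 α
  | box    : AFML2 α → AFML2 α

/-- Satisfaction for AFML[2]. -/
def AFML2.sat {α : Type} (G : LabeledGraph α) : AFML2 α → G.V → Prop
  | .atom p, v => G.label v p
  | .natom p, v => ¬ G.label v p
  | .diaTop, v => ∃ u, G.adj v u
  | .and φ ψ, v => AFML2.sat G φ v ∧ AFML2.sat G ψ v
  | .or φ ψ, v => AFML2.sat G φ v ∨ AFML2.sat G ψ v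
  | .box φ, v => ∀ u, G.adj v u → AFML2.sat G φ u

/-- Alternation-free modal logic: AFML[1] formulas together with AFML[2] formulas. -/
def AFML (α : Type) : Type := AFML1 α ⊕ AFML2 α

/-- Satisfaction for AFML. -/
def AFML.sat {α : Type} (G : LabeledGraph α) : AFML α → G.V → Prop
  | .inl φ => AFML1.sat G φ
  | .inr φ => AFML2.sat G φ

/-- The three aggregation functions. -/
inductive Agg : Type where
  | sum : Agg
  | mean : Agg
  | max : Agg

/-- Apply an aggregation function componentwise to the (multiset of) values of `x`
over the finset `s`; empty aggregation yields `0` (so mean of the empty multiset is `0`). -/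
noncomputable def Agg.apply {V : Type} : Agg → Finset V → (V → ℝ) → ℝ
  | .sum, s, x => ∑ u ∈ s, x u
  | .mean, s, x => (∑ u ∈ s, x u) / (s.card : ℝ)
  | .max, s, x => if h : s.Nonempty then s.sup' h x else 0

/-- A GNN: `L` layers, dimensions `δ 0, …, δ L` with `δ 0 = |α|`,
combination functions `com ℓ : ℝ^{δ ℓ} × ℝ^{δ ℓ} → ℝ^{δ (ℓ+1)}` for `ℓ < L`,
and a threshold classification function `CLS(x) = 1 iff x_clsIdx ∼ clsThr`
where `∼` is `>` if `clsStrict` and `≥` otherwise. -/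
structure GNN (α : Type) [Fintype α] : Type where
  L : ℕ
  δ : ℕ → ℕ
  hδ0 : δ 0 = Fintype.card α
  com : (ℓ : ℕ) → (Fin (δ ℓ) → ℝ) → (Fin (δ ℓ) → ℝ) → (Fin (δ (ℓ+1)) → ℝ)
  clsIdx : Fin (δ L)
  clsStrict : Bool
  clsThr : ℝ

/-- The feature vector computed by a GNN (with aggregation `agg`) at layer `ℓ`
at vertex `v` of graph `G`. Layer 0 yields the 0/1 indicator vector of the labels. -/
noncomputable def GNN.feat {α : Type} [Fintype α] (𝒢 : GNN α) (agg : Agg)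
    (G : LabeledGraph α) : (ℓ : ℕ) → G.V → Fin (𝒢.δ ℓ) → ℝ
  | 0, v, i => if G.label v ((Fintype.equivFin α).symm (Fin.cast 𝒢.hδ0 i)) then 1 else 0
  | (ℓ+1), v, i =>
      𝒢.com ℓ (𝒢.feat agg G ℓ v)
        (fun j => agg.apply (G.nbhdFinset v) (fun u => 𝒢.feat agg G ℓ u j)) i

/-- The GNN accepts a pointed graph iff the classification function outputs 1 on
the final feature vector. -/
noncomputable def GNN.accepts {α : Type} [Fintype α] (𝒢 : GNN α) (agg : Agg)
    (G : LabeledGraph α) (v : G.V) : Prop :=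
  if 𝒢.clsStrict then 𝒢.clsThr < 𝒢.feat agg G 𝒢.L v 𝒢.clsIdx
  else 𝒢.clsThr ≤ 𝒢.feat agg G 𝒢.L v 𝒢.clsIdx

/-- A GNN is simple with activation function `f` if each combination function
has the form `COM(x_v, x_a) = f(x_v·C + x_a·A + b)` (componentwise `f`). -/
def GNN.IsSimple {α : Type} [Fintype α] (𝒢 : GNN α) (f : ℝ → ℝ) : Prop :=
  ∀ ℓ < 𝒢.L, ∃ (C A : Fin (𝒢.δ ℓ) → Fin (𝒢.δ (ℓ+1)) → ℝ) (b : Fin (𝒢.δ (ℓ+1)) → ℝ),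
    ∀ (xv xa : Fin (𝒢.δ ℓ) → ℝ) (i : Fin (𝒢.δ (ℓ+1))),
      𝒢.com ℓ xv xa i = f ((∑ j, xv j * C j i) + (∑ j, xa j * A j i) + b i)

/-- All combination functions of the GNN are continuous. -/
def GNN.HasContinuousCom {α : Type} [Fintype α] (𝒢 : GNN α) : Prop :=
  ∀ ℓ < 𝒢.L,
    Continuous (fun p : (Fin (𝒢.δ ℓ) → ℝ) × (Fin (𝒢.δ ℓ) → ℝ) => 𝒢.com ℓ p.1 p.2)

/-- Truncated ReLU. -/
noncomputable def reluStar : ℝ → ℝ := fun x => min (max 0 x) 1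

/-- ReLU. -/
noncomputable def relu : ℝ → ℝ := fun x => max 0 x

/-- Two pointed graphs have the same vertex labels at their distinguished vertices. -/
def labelsEq {α : Type} (G1 G2 : LabeledGraph α) (v1 : G1.V) (v2 : G2.V) : Prop :=
  ∀ p, G1.label v1 p ↔ G2.label v2 p

/-- Spoiler wins the `ℓ`-round ML game on `((G1,v1),(G2,v2))`. -/
def spoilerWinsML {α : Type} (G1 G2 : LabeledGraph α) : ℕ → G1.V → G2.V → Prop
  | 0, v1, v2 => ¬ labelsEq G1 G2 v1 v2
  | (ℓ+1), v1, v2 =>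
      ¬ labelsEq G1 G2 v1 v2
      ∨ (∃ u1, G1.adj v1 u1 ∧ ∀ u2, G2.adj v2 u2 → spoilerWinsML G1 G2 ℓ u1 u2)
      ∨ (∃ u2, G2.adj v2 u2 ∧ ∀ u1, G1.adj v1 u1 → spoilerWinsML G1 G2 ℓ u1 u2)

/-- Spoiler wins the `ℓ`-round AFML[1] game on `((G1,v1),(G2,v2))`. -/
def spoilerWinsAFML1 {α : Type} (G1 G2 : LabeledGraph α) : ℕ → G1.V → G2.V → Prop
  | 0, v1, v2 => ¬ labelsEq G1 G2 v1 v2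
  | (ℓ+1), v1, v2 =>
      ¬ labelsEq G1 G2 v1 v2
      ∨ ((∀ u, ¬ G1.adj v1 u) ∧ (∃ u, G2.adj v2 u))
      ∨ (∃ u1, G1.adj v1 u1 ∧ ∀ u2, G2.adj v2 u2 → spoilerWinsAFML1 G1 G2 ℓ u1 u2)

/-- Spoiler wins the `ℓ`-round GML game with counting bound `c` on `((G1,v1),(G2,v2))`. -/
def spoilerWinsGML {α : Type} (c : ℕ) (G1 G2 : LabeledGraph α) : ℕ → G1.V → G2.V → Prop
  | 0, v1, v2 => ¬ labelsEq G1 G2 v1 v2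
  | (ℓ+1), v1, v2 =>
      ¬ labelsEq G1 G2 v1 v2
      ∨ (∃ U1 : Finset G1.V, (∀ u ∈ U1, G1.adj v1 u) ∧ 0 < U1.card ∧ U1.card ≤ c ∧
          ((G2.nbhd v2).ncard < U1.card ∨
            ∀ U2 : Finset G2.V, (∀ u ∈ U2, G2.adj v2 u) → U2.card = U1.card →
              ∃ u2 ∈ U2, ∀ u1 ∈ U1, spoilerWinsGML c G1 G2 ℓ u1 u2))
      ∨ (∃ U2 : Finset G2.V, (∀ u ∈ U2, G2.adj v2 u) ∧ 0 < U2.card ∧ U2.card ≤ c ∧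
          ((G1.nbhd v1).ncard < U2.card ∨
            ∀ U1 : Finset G1.V, (∀ u ∈ U1, G1.adj v1 u) → U1.card = U2.card →
              ∃ u1 ∈ U1, ∀ u2 ∈ U2, spoilerWinsGML c G1 G2 ℓ u1 u2))

/-- The ratio `1/2` as an element of `[0,1]`. -/
noncomputable def half : Set.Icc (0:ℝ) 1 := ⟨1/2, by norm_num⟩

lemma my_ncard_prod {β γ : Type} (s : Set β) (t : Set γ) :
    (s ×ˢ t).ncard = s.ncard * t.ncard := by
  rw [← Nat.card_coe_set_eq, ← Nat.card_coe_set_eq, ← Nat.card_coe_set_eq,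
    Nat.card_congr (Equiv.Set.prod s t), Nat.card_prod]

lemma scale_ratio {α : Type} (G : LabeledGraph α) (c : ℕ) (hc : 0 < c)
    (S : Set G.V) (v : G.V) :
    ((S ×ˢ (Set.univ : Set (Fin c))).ncard : ℝ) / (((G.nbhd v) ×ˢ (Set.univ : Set (Fin c))).ncard : ℝ)
      = (S.ncard : ℝ) / ((G.nbhd v).ncard : ℝ) := by
  rw [my_ncard_prod, my_ncard_prod]
  have hu : (Set.univ : Set (Fin c)).ncard = c := by
    simp [Set.ncard_univ]
  rw [hu]
  push_cast
  rw [mul_div_mul_right]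
  exact_mod_cast hc.ne'

lemma scale_sat {α : Type} (c : ℕ) (hc : 0 < c) (ψ : RML α) (G : LabeledGraph α) :
    ∀ p : (G.scale c).V, RML.sat (G.scale c) ψ p ↔ RML.sat G ψ p.1 := by
  induction ψ with
  | atom q => intro p; rfl
  | neg φ ih => intro p; simp only [RML.sat, ih]
  | or φ χ ih1 ih2 => intro p; simp only [RML.sat, ih1, ih2]
  | diaGe r φ ih =>
    intro p
    have hset : {u | (G.scale c).adj p u ∧ RML.sat (G.scale c) φ u}
        = {u | G.adj p.1 u ∧ RML.sat G φ u} ×ˢ (Set.univ : Set (Fin c)) := by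
      ext q
      constructor
      · rintro ⟨ha, hs⟩; exact ⟨⟨ha, (ih q).1 hs⟩, trivial⟩
      · rintro ⟨⟨ha, hs⟩, -⟩; exact ⟨ha, (ih q).2 hs⟩
    have hnb : (G.scale c).nbhd p = (G.nbhd p.1) ×ˢ (Set.univ : Set (Fin c)) := by
      ext q; exact ⟨fun h => ⟨h, trivial⟩, fun h => h.1⟩
    have hne : ((G.nbhd p.1) ×ˢ (Set.univ : Set (Fin c))).Nonempty ↔ (G.nbhd p.1).Nonempty := by
      constructor
      · rintro ⟨q, hq, -⟩; exact ⟨q.1, hq⟩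
      · rintro ⟨u, hu⟩; exact ⟨(u, ⟨0, hc⟩), hu, trivial⟩
    simp only [RML.sat, hset, hnb, hne, scale_ratio G c hc]
    exact imp_congr hne (Iff.of_eq (congrArg (fun x => (r:ℝ) ≤ x)
      (scale_ratio G c hc {u | G.adj p.1 u ∧ RML.sat G φ u} p.1)))
  | diaGt r φ ih =>
    intro p
    have hset : {u | (G.scale c).adj p u ∧ RML.sat (G.scale c) φ u}
        = {u | G.adj p.1 u ∧ RML.sat G φ u} ×ˢ (Set.univ : Set (Fin c)) := by
      ext q
      constructor
      · rintro ⟨ha, hs⟩; exact ⟨⟨ha, (ih q).1 hs⟩, trivial⟩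
      · rintro ⟨⟨ha, hs⟩, -⟩; exact ⟨ha, (ih q).2 hs⟩
    have hnb : (G.scale c).nbhd p = (G.nbhd p.1) ×ˢ (Set.univ : Set (Fin c)) := by
      ext q; exact ⟨fun h => ⟨h, trivial⟩, fun h => h.1⟩
    have hne : ((G.nbhd p.1) ×ˢ (Set.univ : Set (Fin c))).Nonempty ↔ (G.nbhd p.1).Nonempty := by
      constructor
      · rintro ⟨q, hq, -⟩; exact ⟨q.1, hq⟩
      · rintro ⟨u, hu⟩; exact ⟨(u, ⟨0, hc⟩), hu, trivial⟩
    simp only [RML.sat, hset, hnb, hne, scale_ratio G c hc]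
    exact and_congr hne (Iff.of_eq (congrArg (fun x => (r:ℝ) < x)
      (scale_ratio G c hc {u | G.adj p.1 u ∧ RML.sat G φ u} p.1)))

def G0 (α : Type) (P : α) : LabeledGraph α where
  V := Fin 2
  adj := fun v u => v = 0 ∧ u = 1
  label := fun v _ => v = 1

def v0 {α : Type} (P : α) : (G0 α P).V := (0 : Fin 2)
def w0 {α : Type} (P : α) : ((G0 α P).scale 2).V := ((0 : Fin 2), (0 : Fin 2))

lemma g0_not_sat {α : Type} (P : α) : ¬ GML.sat (G0 α P) (GML.dia 2 (GML.atom P)) (v0 P) := by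
  simp only [GML.sat]
  have hsub : {u | (G0 α P).adj (v0 P) u ∧ (G0 α P).label u P}
      ⊆ ({(1 : Fin 2)} : Set ((G0 α P).V)) := by
    rintro u ⟨⟨-, hu⟩, -⟩; exact hu
  have hle := Set.ncard_le_ncard hsub (Set.finite_singleton _)
  replace hle := hle.trans_eq (Set.ncard_singleton (1 : Fin 2))
  omega

lemma g0_scale_sat {α : Type} (P : α) :
    GML.sat ((G0 α P).scale 2) (GML.dia 2 (GML.atom P)) (w0 P) := by
  simp only [GML.sat]
  have heq : {u | ((G0 α P).scale 2).adj (w0 P) u ∧ ((G0 α P).scale 2).label u P}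
      = ({(1 : Fin 2)} : Set (Fin 2)) ×ˢ (Set.univ : Set (Fin 2)) := by
    ext q
    constructor
    · rintro ⟨⟨-, hq⟩, -⟩; exact ⟨hq, trivial⟩
    · rintro ⟨hq, -⟩
      exact ⟨⟨rfl, hq⟩, hq⟩
  rw [heq]
  show 2 ≤ (({(1 : Fin 2)} : Set (Fin 2)) ×ˢ (Set.univ : Set (Fin 2))).ncard
  rw [my_ncard_prod]
  simp [Set.ncard_univ]

/-- There is no RML formula equivalent to the GML formula ◊^{≥2}P. -/
theorem stmt2 {α : Type} (P : α) :
    ¬ ∃ ψ : RML α, ∀ (G : LabeledGraph α) (v : G.V),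
      RML.sat G ψ v ↔ GML.sat G (GML.dia 2 (GML.atom P)) v := by
  rintro ⟨ψ, h⟩
  have hr1 : ¬ RML.sat (G0 α P) ψ (v0 P) :=
    fun hs => g0_not_sat P ((h (G0 α P) (v0 P)).1 hs)
  have hr2 : RML.sat ((G0 α P).scale 2) ψ (w0 P) :=
    (h ((G0 α P).scale 2) (w0 P)).2 (g0_scale_sat P)
  exact hr1 ((scale_sat 2 (by norm_num) ψ (G0 α P) (w0 P)).1 hr2)
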